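/- Let (X,d) be a metric space and μ a Borel measure on X such that 0 < μ(B(x,ρ)) < ∞ for every x ∈ X, ρ > 0, and satisfying the strong homogeneity property: there are constants C ≥ 1 and n > 0 with μ(B(x,λρ)) ≤ C λ^n μ(B(x,ρ)) for all x ∈ X, ρ > 0, λ ≥ 1. Let ρ > 0, a > 0, A > 0, and let h : X × X → ℂ be measurable with |h(w,z)| ≤ A · μ(B(w,ρ))^{−1} (1 + d(w,z)/ρ)^{−n−a} for all w, z ∈ X. Then there exists a constant C' > 0, depending only on C, n and a, such that for all x, y ∈ X and all f, g ∈ L²(X,μ), ∫_{B(x,ρ)} ∫_{B(y,ρ)} |h(w,z)| |f(z)| |g(w)| dμ(z) dμ(w) ≤ C' A (1 + d(x,y)/ρ)^{−a} ‖f‖_{L²} ‖g‖_{L²}. -/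

import Mathlib

open Metric MeasureTheory

/-- Cauchy–Schwarz: the integral of `‖f‖` over a set is bounded by
`μ s ^ (1/2) * ‖f‖_{L²}`. -/
lemma cs_helper {X : Type} [MeasurableSpace X] (μ : Measure X) (s : Set X) (f : X → ℂ)
    (hf : AEStronglyMeasurable f μ) :
    (∫⁻ z in s, (‖f z‖₊ : ENNReal) ∂μ) ≤ μ s ^ ((1 : ℝ)/2) * eLpNorm f 2 μ := by
  have hconj : Real.HolderConjugate 2 2 := Real.HolderConjugate.two_two
  have hfm : AEMeasurable (fun z => (‖f z‖₊ : ENNReal)) (μ.restrict s) :=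
    hf.restrict.enorm
  have key := ENNReal.lintegral_mul_le_Lp_mul_Lq (μ.restrict s) hconj
    (aemeasurable_const (b := (1 : ENNReal))) hfm
  simp only [Pi.mul_apply, one_mul, ENNReal.one_rpow, lintegral_one,
    Measure.restrict_apply_univ] at key
  refine key.trans (mul_le_mul_right ?_ _)
  rw [eLpNorm_eq_lintegral_rpow_enorm_toReal (by norm_num) (by norm_num)]
  have h2 : ((2 : ENNReal)).toReal = (2 : ℝ) := by norm_num
  rw [h2]
  exact ENNReal.rpow_le_rpow (setLIntegral_le_lintegral _ _) (by norm_num)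

/-- `L² → L²` off-diagonal estimate, expressed through its bilinear form, for an
integral operator whose kernel satisfies the Poisson-type pointwise upper bound
`|h(w,z)| ≤ A μ(B(w,ρ))⁻¹ (1 + d(w,z)/ρ)^{-n-a}`. -/
theorem stmt_15 (C n a : ℝ) (hC : 1 ≤ C) (hn : 0 < n) (ha : 0 < a) :
    ∃ C' : ℝ, 0 < C' ∧
      ∀ (X : Type) [MetricSpace X] [MeasurableSpace X] [BorelSpace X]
        (μ : Measure X),
        (∀ (x : X) (ρ : ℝ), 0 < ρ → 0 < μ (ball x ρ)) →
        (∀ (x : X) (ρ : ℝ), 0 < ρ → μ (ball x ρ) < ⊤) →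
        (∀ (x : X) (ρ lam : ℝ), 0 < ρ → 1 ≤ lam →
          μ (ball x (lam * ρ)) ≤ ENNReal.ofReal (C * lam ^ n) * μ (ball x ρ)) →
        ∀ (ρ A : ℝ), 0 < ρ → 0 < A →
          ∀ h : X × X → ℂ, Measurable h →
            (∀ w z : X, ‖h (w, z)‖ ≤
                A * (μ (ball w ρ)).toReal⁻¹ * (1 + dist w z / ρ) ^ (-(n + a))) →
            ∀ (x y : X) (f g : X → ℂ), MemLp f 2 μ → MemLp g 2 μ →
              (∫⁻ w in ball x ρ, ∫⁻ z in ball y ρ,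
                  ENNReal.ofReal (‖h (w, z)‖ * ‖f z‖ * ‖g w‖) ∂μ ∂μ) ≤
                ENNReal.ofReal (C' * A * (1 + dist x y / ρ) ^ (-a)) *
                  eLpNorm f 2 μ * eLpNorm g 2 μ := by
  have hCpos : (0 : ℝ) < C := lt_of_lt_of_le one_pos hC
  refine ⟨C * C ^ ((1 : ℝ)/2) * 2 ^ n * 3 ^ (n + a), by positivity, ?_⟩
  intro X _ _ _ μ hpos hfin hhom ρ A hρ hA h hmeas hker x y f g hf hg
  set C' : ℝ := C * C ^ ((1 : ℝ)/2) * 2 ^ n * 3 ^ (n + a) with hC'def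
  set D : ℝ := dist x y / ρ with hDdef
  have hD : 0 ≤ D := div_nonneg dist_nonneg hρ.le
  have h1D : (0 : ℝ) < 1 + D := by linarith
  set Bx : Set X := ball x ρ with hBx
  set By : Set X := ball y ρ with hBy
  have hμx0 : μ Bx ≠ 0 := (hpos x ρ hρ).ne'
  have hμxt : μ Bx ≠ ⊤ := (hfin x ρ hρ).ne
  have hμyt : μ By ≠ ⊤ := (hfin y ρ hρ).ne
  have hpx : 0 < (μ Bx).toReal := ENNReal.toReal_pos hμx0 hμxt
  -- the constant in the pointwise kernel bound
  set Kc : ℝ := C * 2 ^ n * 3 ^ (n + a) * (1 + D) ^ (-(n + a)) * A with hKc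
  have hKcpos : 0 < Kc := by
    have : (0 : ℝ) < (1 + D) ^ (-(n + a)) := Real.rpow_pos_of_pos h1D _
    positivity
  set M : ℝ := Kc * (μ Bx).toReal⁻¹ with hM
  have hMpos : 0 < M := by positivity
  -- pointwise kernel bound on the product of the two balls
  have hMbound : ∀ w ∈ Bx, ∀ z ∈ By, ‖h (w, z)‖ ≤ M := by
    intro w hw z hz
    have hwx : dist w x < ρ := mem_ball.mp hw
    have hzy : dist z y < ρ := mem_ball.mp hz
    -- decay factor comparison
    have hdwz : (0 : ℝ) < 1 + dist w z / ρ := by positivity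
    have h3 : 1 + D ≤ 3 * (1 + dist w z / ρ) := by
      have htri : dist x y ≤ dist x w + dist w z + dist z y := dist_triangle4 x w z y
      have hxw : dist x w < ρ := by rwa [dist_comm]
      have hDle : D ≤ 2 + dist w z / ρ := by
        rw [hDdef, div_le_iff₀ hρ]
        have hd0 : 0 ≤ dist w z / ρ := by positivity
        have : (2 + dist w z / ρ) * ρ = 2 * ρ + dist w z := by
          field_simp
        rw [this]
        linarith
      have hd0 : 0 ≤ dist w z / ρ := by positivity
      linarith
    have hdecay : (1 + dist w z / ρ) ^ (-(n + a)) ≤ 3 ^ (n + a) * (1 + D) ^ (-(n + a)) := by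
      have hb : (0 : ℝ) < (1 + D) ^ (n + a) := Real.rpow_pos_of_pos h1D _
      have hc : (0 : ℝ) < (1 + dist w z / ρ) ^ (n + a) := Real.rpow_pos_of_pos hdwz _
      have hkey : (1 + D) ^ (n + a) ≤ 3 ^ (n + a) * (1 + dist w z / ρ) ^ (n + a) := by
        rw [← Real.mul_rpow (by norm_num) hdwz.le]
        exact Real.rpow_le_rpow h1D.le h3 (by linarith)
      rw [Real.rpow_neg hdwz.le, Real.rpow_neg h1D.le]
      calc ((1 + dist w z / ρ) ^ (n + a))⁻¹
          ≤ 3 ^ (n + a) / (1 + D) ^ (n + a) := by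
            rw [inv_eq_one_div, div_le_div_iff₀ hc hb]
            nlinarith [hkey]
        _ = 3 ^ (n + a) * ((1 + D) ^ (n + a))⁻¹ := by rw [div_eq_mul_inv]
    -- measure comparison: μ Bx ≤ C 2^n μ (ball w ρ)
    have hμw0 : μ (ball w ρ) ≠ 0 := (hpos w ρ hρ).ne'
    have hμwt : μ (ball w ρ) ≠ ⊤ := (hfin w ρ hρ).ne
    have hpw : 0 < (μ (ball w ρ)).toReal := ENNReal.toReal_pos hμw0 hμwt
    have hsub : Bx ⊆ ball w (2 * ρ) := by
      intro v hv
      have hvx : dist v x < ρ := mem_ball.mp hv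
      have : dist v w ≤ dist v x + dist x w := dist_triangle v x w
      have hxw : dist x w < ρ := by rwa [dist_comm]
      exact mem_ball.mpr (by linarith)
    have hmeasc : μ Bx ≤ ENNReal.ofReal (C * 2 ^ n) * μ (ball w ρ) :=
      le_trans (measure_mono hsub) (hhom w ρ 2 hρ (by norm_num))
    have hreal : (μ Bx).toReal ≤ C * 2 ^ n * (μ (ball w ρ)).toReal := by
      have hrt : (ENNReal.ofReal (C * 2 ^ n) * μ (ball w ρ)).toReal
          = C * 2 ^ n * (μ (ball w ρ)).toReal := by
        rw [ENNReal.toReal_mul, ENNReal.toReal_ofReal (by positivity)]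
      calc (μ Bx).toReal ≤ (ENNReal.ofReal (C * 2 ^ n) * μ (ball w ρ)).toReal :=
            ENNReal.toReal_mono (ENNReal.mul_ne_top ENNReal.ofReal_ne_top hμwt) hmeasc
        _ = C * 2 ^ n * (μ (ball w ρ)).toReal := hrt
    have hinv : (μ (ball w ρ)).toReal⁻¹ ≤ C * 2 ^ n * (μ Bx).toReal⁻¹ := by
      have hd : (1 : ℝ)/(μ (ball w ρ)).toReal ≤ (C * 2 ^ n)/(μ Bx).toReal := by
        rw [div_le_div_iff₀ hpw hpx]
        nlinarith [hreal]
      simpa [one_div, div_eq_mul_inv] using hd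
    calc ‖h (w, z)‖
        ≤ A * (μ (ball w ρ)).toReal⁻¹ * (1 + dist w z / ρ) ^ (-(n + a)) := hker w z
      _ ≤ A * (C * 2 ^ n * (μ Bx).toReal⁻¹) * (3 ^ (n + a) * (1 + D) ^ (-(n + a))) := by
          have e1 : (0 : ℝ) ≤ (1 + dist w z / ρ) ^ (-(n + a)) :=
            (Real.rpow_pos_of_pos hdwz _).le
          have e2 : (0 : ℝ) ≤ A * (μ (ball w ρ)).toReal⁻¹ := by positivity
          have e3 : (0 : ℝ) ≤ A * (C * 2 ^ n * (μ Bx).toReal⁻¹) := by positivity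
          exact mul_le_mul (mul_le_mul_of_nonneg_left hinv hA.le) hdecay e1 e3
      _ = M := by rw [hM, hKc]; ring
  -- notation for the L² norms and partial integrals
  set Nf : ENNReal := eLpNorm f 2 μ with hNf
  set Ng : ENNReal := eLpNorm g 2 μ with hNg
  have hNft : Nf ≠ ⊤ := hf.2.ne
  set IF : ENNReal := ∫⁻ z in By, (‖f z‖₊ : ENNReal) ∂μ with hIF
  set IG : ENNReal := ∫⁻ w in Bx, (‖g w‖₊ : ENNReal) ∂μ with hIG
  have hIFle : IF ≤ μ By ^ ((1 : ℝ)/2) * Nf := cs_helper μ By f hf.1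
  have hIGle : IG ≤ μ Bx ^ ((1 : ℝ)/2) * Ng := cs_helper μ Bx g hg.1
  have hIFt : IF ≠ ⊤ := by
    refine ne_top_of_le_ne_top ?_ hIFle
    exact ENNReal.mul_ne_top (ENNReal.rpow_ne_top_of_nonneg (by norm_num) hμyt) hNft
  -- step 1: bound the double integral by (ofReal M * IF) * IG
  have step1 : (∫⁻ w in Bx, ∫⁻ z in By,
      ENNReal.ofReal (‖h (w, z)‖ * ‖f z‖ * ‖g w‖) ∂μ ∂μ)
      ≤ (ENNReal.ofReal M * IF) * IG := by
    have inner : ∀ w ∈ Bx, (∫⁻ z in By,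
        ENNReal.ofReal (‖h (w, z)‖ * ‖f z‖ * ‖g w‖) ∂μ)
        ≤ (ENNReal.ofReal M * IF) * (‖g w‖₊ : ENNReal) := by
      intro w hw
      have ptw : ∀ z ∈ By, ENNReal.ofReal (‖h (w, z)‖ * ‖f z‖ * ‖g w‖)
          ≤ (ENNReal.ofReal M * (‖g w‖₊ : ENNReal)) * (‖f z‖₊ : ENNReal) := by
        intro z hz
        have hb := hMbound w hw z hz
        have h1 : ‖h (w, z)‖ * ‖f z‖ * ‖g w‖ ≤ M * ‖f z‖ * ‖g w‖ :=
          mul_le_mul_of_nonneg_right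
            (mul_le_mul_of_nonneg_right hb (norm_nonneg _)) (norm_nonneg _)
        calc ENNReal.ofReal (‖h (w, z)‖ * ‖f z‖ * ‖g w‖)
            ≤ ENNReal.ofReal (M * ‖f z‖ * ‖g w‖) := ENNReal.ofReal_le_ofReal h1
          _ = ENNReal.ofReal M * ENNReal.ofReal ‖f z‖ * ENNReal.ofReal ‖g w‖ := by
              rw [ENNReal.ofReal_mul (by positivity), ENNReal.ofReal_mul hMpos.le]
          _ = ENNReal.ofReal M * (‖f z‖₊ : ENNReal) * (‖g w‖₊ : ENNReal) := by
              exact congrArg₂ (· * ·) (congrArg (ENNReal.ofReal M * ·) (ofReal_norm (f z))) (ofReal_norm (g w))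
          _ = (ENNReal.ofReal M * (‖g w‖₊ : ENNReal)) * (‖f z‖₊ : ENNReal) := by ring
      calc (∫⁻ z in By, ENNReal.ofReal (‖h (w, z)‖ * ‖f z‖ * ‖g w‖) ∂μ)
          ≤ ∫⁻ z in By, (ENNReal.ofReal M * (‖g w‖₊ : ENNReal)) * (‖f z‖₊ : ENNReal) ∂μ :=
            setLIntegral_mono' measurableSet_ball ptw
        _ = (ENNReal.ofReal M * (‖g w‖₊ : ENNReal)) * IF := by
            rw [lintegral_const_mul' _ _
              (ENNReal.mul_ne_top ENNReal.ofReal_ne_top ENNReal.coe_ne_top)]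
        _ = (ENNReal.ofReal M * IF) * (‖g w‖₊ : ENNReal) := by ring
    calc (∫⁻ w in Bx, ∫⁻ z in By,
          ENNReal.ofReal (‖h (w, z)‖ * ‖f z‖ * ‖g w‖) ∂μ ∂μ)
        ≤ ∫⁻ w in Bx, (ENNReal.ofReal M * IF) * (‖g w‖₊ : ENNReal) ∂μ :=
          setLIntegral_mono' measurableSet_ball inner
      _ = (ENNReal.ofReal M * IF) * IG := by
          rw [lintegral_const_mul' _ _ (ENNReal.mul_ne_top ENNReal.ofReal_ne_top hIFt)]
  -- step 2: scalar estimate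
  have step2 : ENNReal.ofReal M * μ By ^ ((1 : ℝ)/2) * μ Bx ^ ((1 : ℝ)/2)
      ≤ ENNReal.ofReal (C' * A * (1 + D) ^ (-a)) := by
    have hMeq : ENNReal.ofReal M = ENNReal.ofReal Kc * (μ Bx)⁻¹ := by
      rw [hM, ENNReal.ofReal_mul hKcpos.le]
      congr 1
      rw [← ENNReal.toReal_inv, ENNReal.ofReal_toReal (ENNReal.inv_ne_top.mpr hμx0)]
    -- compare μ By with μ Bx
    have hsub : By ⊆ ball x ((1 + D) * ρ) := by
      intro v hv
      have hvy : dist v y < ρ := mem_ball.mp hv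
      have htri : dist v x ≤ dist v y + dist y x := dist_triangle v y x
      have hDρ : (1 + D) * ρ = ρ + dist x y := by
        rw [hDdef]; field_simp
      rw [mem_ball, hDρ, dist_comm y x] at *
      linarith
    have hμcomp : μ By ≤ ENNReal.ofReal (C * (1 + D) ^ n) * μ Bx :=
      le_trans (measure_mono hsub) (hhom x ρ (1 + D) hρ (by linarith))
    set c2 : ℝ := (C * (1 + D) ^ n) ^ ((1 : ℝ)/2) with hc2
    have hc2pos : 0 < C * (1 + D) ^ n := by
      have := Real.rpow_pos_of_pos h1D n; positivity
    have hμyhalf : μ By ^ ((1 : ℝ)/2) ≤ ENNReal.ofReal c2 * μ Bx ^ ((1 : ℝ)/2) := by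
      calc μ By ^ ((1 : ℝ)/2)
          ≤ (ENNReal.ofReal (C * (1 + D) ^ n) * μ Bx) ^ ((1 : ℝ)/2) :=
            ENNReal.rpow_le_rpow hμcomp (by norm_num)
        _ = ENNReal.ofReal (C * (1 + D) ^ n) ^ ((1 : ℝ)/2) * μ Bx ^ ((1 : ℝ)/2) :=
            ENNReal.mul_rpow_of_nonneg _ _ (by norm_num)
        _ = ENNReal.ofReal c2 * μ Bx ^ ((1 : ℝ)/2) := by
            rw [hc2, ENNReal.ofReal_rpow_of_pos hc2pos]
    have hhalfmul : μ Bx ^ ((1 : ℝ)/2) * μ Bx ^ ((1 : ℝ)/2) = μ Bx := by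
      rw [← ENNReal.rpow_add _ _ hμx0 hμxt]
      norm_num
    have hreal : Kc * c2 ≤ C' * A * (1 + D) ^ (-a) := by
      have e : c2 = C ^ ((1 : ℝ)/2) * (1 + D) ^ (n / 2) := by
        rw [hc2, Real.mul_rpow hCpos.le (Real.rpow_pos_of_pos h1D n).le]
        congr 1
        rw [← Real.rpow_mul h1D.le]
        congr 1
        ring
      have e2 : (1 + D) ^ (-(n + a)) * (1 + D) ^ (n / 2) ≤ (1 + D) ^ (-a) := by
        rw [← Real.rpow_add h1D]
        exact Real.rpow_le_rpow_of_exponent_le (by linarith) (by linarith)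
      calc Kc * c2
          = (C * C ^ ((1 : ℝ)/2) * 2 ^ n * 3 ^ (n + a) * A) *
              ((1 + D) ^ (-(n + a)) * (1 + D) ^ (n / 2)) := by rw [hKc, e]; ring
        _ ≤ (C * C ^ ((1 : ℝ)/2) * 2 ^ n * 3 ^ (n + a) * A) * (1 + D) ^ (-a) := by
            apply mul_le_mul_of_nonneg_left e2
            positivity
        _ = C' * A * (1 + D) ^ (-a) := by rw [hC'def]; try ring
    calc ENNReal.ofReal M * μ By ^ ((1 : ℝ)/2) * μ Bx ^ ((1 : ℝ)/2)
        ≤ ENNReal.ofReal M * (ENNReal.ofReal c2 * μ Bx ^ ((1 : ℝ)/2)) * μ Bx ^ ((1 : ℝ)/2) := by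
          gcongr
      _ = ENNReal.ofReal Kc * ENNReal.ofReal c2 *
            ((μ Bx)⁻¹ * (μ Bx ^ ((1 : ℝ)/2) * μ Bx ^ ((1 : ℝ)/2))) := by
          rw [hMeq]; ring
      _ = ENNReal.ofReal Kc * ENNReal.ofReal c2 * ((μ Bx)⁻¹ * μ Bx) := by
          rw [hhalfmul]
      _ = ENNReal.ofReal Kc * ENNReal.ofReal c2 := by
          rw [ENNReal.inv_mul_cancel hμx0 hμxt, mul_one]
      _ = ENNReal.ofReal (Kc * c2) := (ENNReal.ofReal_mul hKcpos.le).symm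
      _ ≤ ENNReal.ofReal (C' * A * (1 + D) ^ (-a)) := ENNReal.ofReal_le_ofReal hreal
  -- combine everything
  calc (∫⁻ w in Bx, ∫⁻ z in By,
        ENNReal.ofReal (‖h (w, z)‖ * ‖f z‖ * ‖g w‖) ∂μ ∂μ)
      ≤ (ENNReal.ofReal M * IF) * IG := step1
    _ ≤ (ENNReal.ofReal M * (μ By ^ ((1 : ℝ)/2) * Nf)) * (μ Bx ^ ((1 : ℝ)/2) * Ng) := by
        gcongr
    _ = (ENNReal.ofReal M * μ By ^ ((1 : ℝ)/2) * μ Bx ^ ((1 : ℝ)/2)) * Nf * Ng := by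
        ring
    _ ≤ ENNReal.ofReal (C' * A * (1 + D) ^ (-a)) * Nf * Ng := by
        gcongr
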